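/- arXiv:1001.5243 — 2 statements merged into one kernel-verified Lean document; each statement's English description precedes it below -/
import Mathlib

section
/- Let α, β ∈ V satisfy ⟨α,α⟩ < 0, ⟨β,β⟩ < 0 and ⟨α,β⟩ < 0. Then β can be written as β = q + tα with q ∈ Q̄ and t ≥ 0 if and only if there exists t > 0 with tβ − α ∈ Q̄. -/
open scoped BigOperators

/-- The Minkowski intersection form of signature (1,r) on `ℝ^{r+1}`:
`⟨u,v⟩ = u₀v₀ − u₁v₁ − ⋯ − u_r v_r`. -/
noncomputable def mform (r : ℕ) (u v : Fin (r + 1) → ℝ) : ℝ :=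
  u 0 * v 0 - ∑ i : Fin r, u i.succ * v i.succ

/-- The class `L = (1,0,…,0)` of a line. -/
def lclass (r : ℕ) : Fin (r + 1) → ℝ := fun i => if i = 0 then 1 else 0

/-- The canonical class `K = (−3,1,…,1)`. -/
def kclass (r : ℕ) : Fin (r + 1) → ℝ := fun i => if i = 0 then -3 else 1

/-- `Q = {α : ⟨α,α⟩ ≥ 0, ⟨α,L⟩ > 0}`. -/
def Qset (r : ℕ) : Set (Fin (r + 1) → ℝ) :=
  {α | 0 ≤ mform r α α ∧ 0 < mform r α (lclass r)}

/-- `Q̄ = {α : ⟨α,α⟩ ≥ 0, ⟨α,L⟩ ≥ 0}`. -/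
def Qbar (r : ℕ) : Set (Fin (r + 1) → ℝ) :=
  {α | 0 ≤ mform r α α ∧ 0 ≤ mform r α (lclass r)}

lemma mform_smul_left (r : ℕ) (c : ℝ) (u v : Fin (r + 1) → ℝ) :
    mform r (c • u) v = c * mform r u v := by
  simp only [mform, Pi.smul_apply, smul_eq_mul, mul_sub, Finset.mul_sum, mul_assoc]

lemma mform_smul_right (r : ℕ) (c : ℝ) (u v : Fin (r + 1) → ℝ) :
    mform r u (c • v) = c * mform r u v := by
  simp only [mform, Pi.smul_apply, smul_eq_mul, mul_sub, Finset.mul_sum]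
  ring_nf

lemma Qbar_smul (r : ℕ) {c : ℝ} (hc : 0 ≤ c) {q : Fin (r + 1) → ℝ} (hq : q ∈ Qbar r) :
    c • q ∈ Qbar r := by
  obtain ⟨h1, h2⟩ := hq
  constructor
  · rw [mform_smul_left, mform_smul_right]
    positivity
  · rw [mform_smul_left]
    positivity

theorem stmt2 (r : ℕ) (hr : 1 ≤ r) (α β : Fin (r + 1) → ℝ)
    (hαα : mform r α α < 0) (hββ : mform r β β < 0) (hαβ : mform r α β < 0) :
    (∃ q ∈ Qbar r, ∃ t : ℝ, 0 ≤ t ∧ β = q + t • α) ↔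
      (∃ t : ℝ, 0 < t ∧ (t • β - α) ∈ Qbar r) := by
  constructor
  · rintro ⟨q, hq, t, ht, rfl⟩
    have ht' : 0 < t := by
      rcases lt_or_eq_of_le ht with h | h
      · exact h
      · exfalso
        subst h
        simp only [zero_smul, add_zero] at hββ
        exact absurd hq.1 (not_le.mpr hββ)
    refine ⟨1 / t, by positivity, ?_⟩
    have : (1 / t) • (q + t • α) - α = (1 / t) • q := by
      rw [smul_add, smul_smul]
      field_simp
      rw [one_smul]
      abel
    rw [this]
    exact Qbar_smul r (by positivity) hq
  · rintro ⟨t, ht, hq⟩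
    refine ⟨(1 / t) • (t • β - α), Qbar_smul r (by positivity) hq, 1 / t, by positivity, ?_⟩
    rw [smul_sub, smul_smul]
    field_simp
    rw [one_smul]
    abel
end

section
/- Assume r > 10 and let e ∈ V satisfy ⟨e,e⟩ = −1 and ⟨e,K⟩ = −1. Then e does not lie in the cone Q̄ + ℝ_{≥0}·K: there exist no q ∈ Q̄ and t ≥ 0 with e = q + tK. (Every (−1)-class lies in the complement of the shade Q + ℝ_{≥0}·K.) -/
open scoped BigOperators

lemma mform_add_left (r : ℕ) (a b c : Fin (r + 1) → ℝ) :
    mform r (a + b) c = mform r a c + mform r b c := by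
  simp [mform, add_mul, Finset.sum_add_distrib]; ring

lemma mform_add_right (r : ℕ) (a b c : Fin (r + 1) → ℝ) :
    mform r a (b + c) = mform r a b + mform r a c := by
  simp [mform, mul_add, Finset.sum_add_distrib]; ring

lemma mform_smul_left_s10 (r : ℕ) (t : ℝ) (a b : Fin (r + 1) → ℝ) :
    mform r (t • a) b = t * mform r a b := by
  simp [mform, Finset.mul_sum, mul_assoc, mul_sub]

lemma mform_smul_right_s10 (r : ℕ) (t : ℝ) (a b : Fin (r + 1) → ℝ) :
    mform r a (t • b) = t * mform r a b := by
  simp only [mform, Pi.smul_apply, smul_eq_mul, Finset.mul_sum, mul_sub]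
  congr 1
  · ring
  · exact Finset.sum_congr rfl fun i _ => by ring

lemma mform_comm (r : ℕ) (a b : Fin (r + 1) → ℝ) :
    mform r a b = mform r b a := by
  unfold mform
  rw [mul_comm]
  congr 1
  exact Finset.sum_congr rfl fun i _ => mul_comm _ _

lemma mform_kk (r : ℕ) : mform r (kclass r) (kclass r) = 9 - r := by
  simp [mform, kclass, Fin.succ_ne_zero]
  norm_num

theorem stmt10 (r : ℕ) (hr : 10 < r) (e : Fin (r + 1) → ℝ)
    (hee : mform r e e = -1) (heK : mform r e (kclass r) = -1) :
    ¬ ∃ q ∈ Qbar r, ∃ t : ℝ, 0 ≤ t ∧ e = q + t • kclass r := by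
  rintro ⟨q, ⟨hqq, -⟩, t, ht, rfl⟩
  rw [mform_add_left, mform_add_right, mform_add_right, mform_smul_left_s10,
    mform_smul_right_s10, mform_smul_right_s10, mform_smul_left_s10, mform_kk] at hee
  rw [mform_add_left, mform_smul_left_s10, mform_kk] at heK
  rw [mform_comm r (kclass r) q] at hee
  have hr' : (11 : ℝ) ≤ (r : ℝ) := by exact_mod_cast hr
  have h1 : mform r q q = -1 + 2*t - t^2*((r:ℝ)-9) := by linear_combination hee - 2*t*heK
  rw [h1] at hqq
  nlinarith [sq_nonneg (((r : ℝ) - 9) * t - 1),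
    mul_nonneg (show (0:ℝ) ≤ (r:ℝ) - 9 by linarith) hqq]
end
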